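/- arXiv:1111.3966 — 6 statements merged into one kernel-verified Lean document; each statement's English description precedes it below -/
import Mathlib

section
/- Fix real numbers a, α, β, δ, μ, ρ with ρ² ≤ 1. Define K = a·α + μ·ρ, M = μ²·(1 − ρ²), V = K² + a²·β² + a²·δ² + M + 1, and for each real λ define f(λ) = (μ² + λ² + 2·μ·ρ·λ)·V − ((μ·ρ + λ)·K + M)² (the determinant of the covariance matrix of (U₂₂′, Y₂′), with var(U₂₂′) = μ² + λ² + 2μρλ, E(U₂₂′Y₂′) = (μρ+λ)K + M, var(Y₂′) = V). Then λ* = (a·α·M − μ·ρ·(a²·β² + a²·δ² + 1)) / (a²·β² + a²·δ² + M + 1) satisfies f(λ*) ≤ f(λ) for every real λ; moreover λ* is the unique global minimizer of f. -/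
/-- Corollary 3: the optimal binning parameter for the full-duplex Gaussian
Han-Kobayashi PDF-binning scheme, minimizing the determinant of the covariance
matrix of `(U₂₂', Y₂')`; it is the unique global minimizer. -/
theorem optimal_lambda_FD_HK_PDF_binning (a α β δ μ ρ : ℝ) (hρ : ρ ^ 2 ≤ 1) :
    let K : ℝ := a * α + μ * ρ
    let M : ℝ := μ ^ 2 * (1 - ρ ^ 2)
    let V : ℝ := K ^ 2 + a ^ 2 * β ^ 2 + a ^ 2 * δ ^ 2 + M + 1
    let f : ℝ → ℝ := fun lam =>
      (μ ^ 2 + lam ^ 2 + 2 * μ * ρ * lam) * V - ((μ * ρ + lam) * K + M) ^ 2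
    let lamStar : ℝ :=
      (a * α * M - μ * ρ * (a ^ 2 * β ^ 2 + a ^ 2 * δ ^ 2 + 1)) /
        (a ^ 2 * β ^ 2 + a ^ 2 * δ ^ 2 + M + 1)
    (∀ lam : ℝ, f lamStar ≤ f lam) ∧
      (∀ lam : ℝ, (∀ l : ℝ, f lam ≤ f l) → lam = lamStar) := by
  intro K M V f lamStar
  have hM : (0:ℝ) ≤ μ ^ 2 * (1 - ρ ^ 2) := by
    have : 0 ≤ 1 - ρ ^ 2 := by linarith
    exact mul_nonneg (sq_nonneg μ) this
  have hD : (0:ℝ) < a ^ 2 * β ^ 2 + a ^ 2 * δ ^ 2 + μ ^ 2 * (1 - ρ ^ 2) + 1 := by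
    have h1 : (0:ℝ) ≤ a ^ 2 * β ^ 2 := by positivity
    have h2 : (0:ℝ) ≤ a ^ 2 * δ ^ 2 := by positivity
    linarith
  have hN : (a ^ 2 * β ^ 2 + a ^ 2 * δ ^ 2 + μ ^ 2 * (1 - ρ ^ 2) + 1) * lamStar
      = a * α * (μ ^ 2 * (1 - ρ ^ 2)) - μ * ρ * (a ^ 2 * β ^ 2 + a ^ 2 * δ ^ 2 + 1) := by
    show (a ^ 2 * β ^ 2 + a ^ 2 * δ ^ 2 + μ ^ 2 * (1 - ρ ^ 2) + 1) *
      ((a * α * (μ ^ 2 * (1 - ρ ^ 2)) - μ * ρ * (a ^ 2 * β ^ 2 + a ^ 2 * δ ^ 2 + 1)) /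
        (a ^ 2 * β ^ 2 + a ^ 2 * δ ^ 2 + μ ^ 2 * (1 - ρ ^ 2) + 1)) = _
    rw [mul_div_cancel₀ _ hD.ne']
  -- from here on, treat lamStar as an opaque real satisfying hN
  obtain ⟨s, hs⟩ : ∃ s : ℝ, lamStar = s := ⟨lamStar, rfl⟩
  rw [hs] at hN
  rw [hs]
  have key : ∀ lam : ℝ, f lam - f s
      = (a ^ 2 * β ^ 2 + a ^ 2 * δ ^ 2 + μ ^ 2 * (1 - ρ ^ 2) + 1) * (lam - s) ^ 2 := by
    intro lam
    show ((μ ^ 2 + lam ^ 2 + 2 * μ * ρ * lam) *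
          ((a * α + μ * ρ) ^ 2 + a ^ 2 * β ^ 2 + a ^ 2 * δ ^ 2 + μ ^ 2 * (1 - ρ ^ 2) + 1)
        - ((μ * ρ + lam) * (a * α + μ * ρ) + μ ^ 2 * (1 - ρ ^ 2)) ^ 2)
        - ((μ ^ 2 + s ^ 2 + 2 * μ * ρ * s) *
          ((a * α + μ * ρ) ^ 2 + a ^ 2 * β ^ 2 + a ^ 2 * δ ^ 2 + μ ^ 2 * (1 - ρ ^ 2) + 1)
        - ((μ * ρ + s) * (a * α + μ * ρ) + μ ^ 2 * (1 - ρ ^ 2)) ^ 2)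
        = (a ^ 2 * β ^ 2 + a ^ 2 * δ ^ 2 + μ ^ 2 * (1 - ρ ^ 2) + 1) * (lam - s) ^ 2
    linear_combination (2 * (lam - s)) * hN
  constructor
  · intro lam
    have h := key lam
    nlinarith [mul_nonneg hD.le (sq_nonneg (lam - s))]
  · intro lam hmin
    have h1 := hmin s
    have h2 := key lam
    have hsq : (lam - s) ^ 2 = 0 := by nlinarith [sq_nonneg (lam - s)]
    have : lam - s = 0 := pow_eq_zero_iff two_ne_zero |>.mp hsq
    linarith
end

section
/- Fix real numbers a, α₂, γ₂, μ, ρ with ρ² ≤ 1. Define K = a·α₂ + μ·ρ, M = μ²·(1 − ρ²), V = K² + a²·γ₂² + M + 1, and for each real λ define f(λ) = (μ² + λ² + 2·μ·ρ·λ)·V − ((μ·ρ + λ)·K + M)². Then λ* = (a·α₂·M − μ·ρ·(a²·γ₂² + 1)) / (a²·γ₂² + M + 1) satisfies f(λ*) ≤ f(λ) for every real λ; moreover λ* is the unique global minimizer of f. -/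
/-- Corollary (Section VI): the optimal binning parameter for the half-duplex
Gaussian Han-Kobayashi PDF-binning scheme; it is the unique global minimizer. -/
theorem optimal_lambda_HD_HK_PDF_binning (a α₂ γ₂ μ ρ : ℝ) (hρ : ρ ^ 2 ≤ 1) :
    let K : ℝ := a * α₂ + μ * ρ
    let M : ℝ := μ ^ 2 * (1 - ρ ^ 2)
    let V : ℝ := K ^ 2 + a ^ 2 * γ₂ ^ 2 + M + 1
    let f : ℝ → ℝ := fun lam =>
      (μ ^ 2 + lam ^ 2 + 2 * μ * ρ * lam) * V - ((μ * ρ + lam) * K + M) ^ 2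
    let lamStar : ℝ :=
      (a * α₂ * M - μ * ρ * (a ^ 2 * γ₂ ^ 2 + 1)) / (a ^ 2 * γ₂ ^ 2 + M + 1)
    (∀ lam : ℝ, f lamStar ≤ f lam) ∧
      (∀ lam : ℝ, (∀ l : ℝ, f lam ≤ f l) → lam = lamStar) := by
  intro K M V f lamStar
  have hM : 0 ≤ M := by
    have : 0 ≤ 1 - ρ ^ 2 := by linarith
    exact mul_nonneg (sq_nonneg μ) this
  set A : ℝ := a ^ 2 * γ₂ ^ 2 + M + 1 with hA_def
  have hA : 0 < A := by positivity
  have key : ∀ l : ℝ, f l - f lamStar = A * (l - lamStar) ^ 2 := by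
    intro l
    have hAne : A ≠ 0 := ne_of_gt hA
    show f l - f lamStar = A * (l - lamStar) ^ 2
    simp only [f, lamStar, K, V, M, ← hA_def]
    field_simp
    ring
  constructor
  · intro lam
    have h := key lam
    nlinarith [sq_nonneg (lam - lamStar), mul_nonneg hA.le (sq_nonneg (lam - lamStar))]
  · intro lam hmin
    have h := key lam
    have h2 := hmin lamStar
    have hsq : A * (lam - lamStar) ^ 2 ≤ 0 := by linarith
    have : (lam - lamStar) ^ 2 ≤ 0 := by
      by_contra hc
      push_neg at hc
      nlinarith
    have : lam - lamStar = 0 := by nlinarith [sq_nonneg (lam - lamStar)]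
    linarith
end

section
/- Let P₁ ≥ 0, P₂ ≥ 0 and a, b, c be real numbers, and let C(x) = (1/2)·log₂(1 + x). Define S₁ = { min( C(c²β²/(c²γ²+1)) + C(γ²/(b²μ²(1−ρ²)+1)), C(((α+bμρ)² + β² + γ²)/(b²μ²(1−ρ²)+1)) ) : α, β, γ, μ, ρ ∈ ℝ, α² + β² + γ² ≤ P₁, μ² ≤ P₂, ρ² ≤ 1 } and S₂ = { min( C(c²β²/(c²γ²+1)) + C(γ²), C((α + b·√P₂)² + β² + γ²) ) : α, β, γ ∈ ℝ, α² + β² + γ² ≤ P₁ }. Then sSup S₁ = sSup S₂. -/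
private lemma Cmono {x y : ℝ} (hx : 0 ≤ x) (hxy : x ≤ y) :
    (1 / 2 : ℝ) * Real.logb 2 (1 + x) ≤ (1 / 2) * Real.logb 2 (1 + y) := by
  have := Real.logb_le_logb_of_le (b := 2) one_lt_two (x := 1 + x) (y := 1 + y)
    (by linarith) (by linarith)
  linarith

/-- Equation (25): in the full-duplex Gaussian PDF-binning region, the maximum
rate for user 1 equals the partial decode-forward relaying rate, obtained at
ρ = ±1 and μ = ρ√P₂. -/
theorem FD_PDF_binning_maxR1 (P₁ P₂ a b c : ℝ) (hP₁ : 0 ≤ P₁) (hP₂ : 0 ≤ P₂) :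
    let C : ℝ → ℝ := fun x => (1 / 2) * Real.logb 2 (1 + x)
    let S₁ : Set ℝ := {r | ∃ α β γ μ ρ : ℝ,
      α ^ 2 + β ^ 2 + γ ^ 2 ≤ P₁ ∧ μ ^ 2 ≤ P₂ ∧ ρ ^ 2 ≤ 1 ∧
      r = min
        (C (c ^ 2 * β ^ 2 / (c ^ 2 * γ ^ 2 + 1)) +
          C (γ ^ 2 / (b ^ 2 * μ ^ 2 * (1 - ρ ^ 2) + 1)))
        (C (((α + b * μ * ρ) ^ 2 + β ^ 2 + γ ^ 2) /
          (b ^ 2 * μ ^ 2 * (1 - ρ ^ 2) + 1)))}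
    let S₂ : Set ℝ := {r | ∃ α β γ : ℝ,
      α ^ 2 + β ^ 2 + γ ^ 2 ≤ P₁ ∧
      r = min
        (C (c ^ 2 * β ^ 2 / (c ^ 2 * γ ^ 2 + 1)) + C (γ ^ 2))
        (C ((α + b * Real.sqrt P₂) ^ 2 + β ^ 2 + γ ^ 2))}
    sSup S₁ = sSup S₂ := by
  intro C S₁ S₂
  -- S₂ ⊆ S₁ via μ = √P₂, ρ = 1
  have hsub : S₂ ⊆ S₁ := by
    rintro r ⟨α, β, γ, h1, rfl⟩
    refine ⟨α, β, γ, Real.sqrt P₂, 1, h1, by rw [Real.sq_sqrt hP₂], by norm_num, ?_⟩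
    norm_num
  -- S₂ is nonempty
  have hne₂ : S₂.Nonempty := by
    exact ⟨_, 0, 0, 0, by simpa using hP₁, rfl⟩
  have hne₁ : S₁.Nonempty := hne₂.mono hsub
  -- S₁ is bounded above
  have hbdd₁ : BddAbove S₁ := by
    refine ⟨C (2 * P₁ + 2 * b ^ 2 * P₂), ?_⟩
    rintro r ⟨α, β, γ, μ, ρ, h1, h2, h3, rfl⟩
    have hD : (1 : ℝ) ≤ b ^ 2 * μ ^ 2 * (1 - ρ ^ 2) + 1 := by
      have h0 : (0:ℝ) ≤ b ^ 2 * μ ^ 2 * (1 - ρ ^ 2) := mul_nonneg (by positivity) (by linarith)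
      linarith
    have hN : (0 : ℝ) ≤ (α + b * μ * ρ) ^ 2 + β ^ 2 + γ ^ 2 := by positivity
    have hle : ((α + b * μ * ρ) ^ 2 + β ^ 2 + γ ^ 2) /
        (b ^ 2 * μ ^ 2 * (1 - ρ ^ 2) + 1) ≤ 2 * P₁ + 2 * b ^ 2 * P₂ := by
      have h4 : ((α + b * μ * ρ) ^ 2 + β ^ 2 + γ ^ 2) /
          (b ^ 2 * μ ^ 2 * (1 - ρ ^ 2) + 1) ≤ (α + b * μ * ρ) ^ 2 + β ^ 2 + γ ^ 2 :=
        div_le_self hN hD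
      nlinarith [sq_nonneg (α - b * μ * ρ), sq_nonneg (b * μ), sq_nonneg b, sq_nonneg ρ,
        mul_le_mul_of_nonneg_left h2 (sq_nonneg b)]
    refine le_trans (min_le_right _ _) (Cmono (by positivity) hle)
  have hbdd₂ : BddAbove S₂ := hbdd₁.mono hsub
  refine le_antisymm (csSup_le hne₁ ?_) (csSup_le_csSup hbdd₁ hne₂ hsub)
  rintro r ⟨α, β, γ, μ, ρ, h1, h2, h3, rfl⟩
  -- choose α' with same square and |α' + b√P₂| ≥ |α + bμρ|
  set t := b * Real.sqrt P₂ with ht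
  set α' : ℝ := if 0 ≤ t then |α| else -|α| with hα'
  have hα'sq : α' ^ 2 = α ^ 2 := by
    rcases le_or_gt 0 t with h | h
    · simp [hα', h, sq_abs]
    · simp [hα', not_le.mpr h, sq_abs]
  have hμρ : |μ * ρ| ≤ Real.sqrt P₂ := by
    rw [abs_mul]
    calc |μ| * |ρ| ≤ |μ| * 1 := by
          refine mul_le_mul_of_nonneg_left ?_ (abs_nonneg μ)
          nlinarith [sq_abs ρ, abs_nonneg ρ]
      _ = |μ| := mul_one _
      _ ≤ Real.sqrt P₂ := by
          rw [← Real.sqrt_sq_eq_abs]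
          exact Real.sqrt_le_sqrt h2
  have hkey : (α + b * μ * ρ) ^ 2 ≤ (α' + t) ^ 2 := by
    have h5 : |α + b * μ * ρ| ≤ |α| + |t| := by
      calc |α + b * μ * ρ| ≤ |α| + |b * μ * ρ| := abs_add_le _ _
        _ ≤ |α| + |t| := by
            have hbt : |b * μ * ρ| ≤ |t| := by
              rw [ht, mul_assoc, abs_mul, abs_mul, abs_mul, abs_of_nonneg (Real.sqrt_nonneg P₂)]
              have h' : |μ| * |ρ| ≤ Real.sqrt P₂ := by rwa [abs_mul] at hμρ
              exact mul_le_mul_of_nonneg_left h' (abs_nonneg b)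
            linarith
    have h6 : |α' + t| = |α| + |t| := by
      rcases le_or_gt 0 t with h | h
      · rw [hα', if_pos h, abs_of_nonneg h, abs_of_nonneg (by positivity)]
      · rw [hα', if_neg (not_le.mpr h), abs_of_neg h]
        rw [abs_of_nonpos (by linarith [abs_nonneg α])]
        ring
    calc (α + b * μ * ρ) ^ 2 = |α + b * μ * ρ| ^ 2 := (sq_abs _).symm
      _ ≤ (|α| + |t|) ^ 2 := by nlinarith [abs_nonneg (α + b * μ * ρ)]
      _ = |α' + t| ^ 2 := by rw [h6]
      _ = (α' + t) ^ 2 := sq_abs _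
  have hD : (1 : ℝ) ≤ b ^ 2 * μ ^ 2 * (1 - ρ ^ 2) + 1 := by
    have h0 : (0:ℝ) ≤ b ^ 2 * μ ^ 2 * (1 - ρ ^ 2) := mul_nonneg (by positivity) (by linarith)
    linarith
  have hmem : min (C (c ^ 2 * β ^ 2 / (c ^ 2 * γ ^ 2 + 1)) + C (γ ^ 2))
      (C ((α' + b * Real.sqrt P₂) ^ 2 + β ^ 2 + γ ^ 2)) ∈ S₂ :=
    ⟨α', β, γ, by rw [hα'sq]; exact h1, rfl⟩
  refine le_trans (min_le_min ?_ ?_) (le_csSup hbdd₂ hmem)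
  · have : γ ^ 2 / (b ^ 2 * μ ^ 2 * (1 - ρ ^ 2) + 1) ≤ γ ^ 2 :=
      div_le_self (sq_nonneg γ) hD
    have := Cmono (x := γ ^ 2 / (b ^ 2 * μ ^ 2 * (1 - ρ ^ 2) + 1)) (y := γ ^ 2)
      (by positivity) this
    simpa [C] using add_le_add_left this (C (c ^ 2 * β ^ 2 / (c ^ 2 * γ ^ 2 + 1)))
  · refine Cmono (by positivity) ?_
    calc ((α + b * μ * ρ) ^ 2 + β ^ 2 + γ ^ 2) / (b ^ 2 * μ ^ 2 * (1 - ρ ^ 2) + 1)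
        ≤ (α + b * μ * ρ) ^ 2 + β ^ 2 + γ ^ 2 := div_le_self (by positivity) hD
      _ ≤ (α' + b * Real.sqrt P₂) ^ 2 + β ^ 2 + γ ^ 2 := by
          rw [← ht]; linarith [hkey]
end

section
/- Let P₁ ≥ 0, P₂ ≥ 0 and a be real numbers, and let C(x) = (1/2)·log₂(1 + x). Consider the set S of real numbers of the form C(μ²(1−ρ²)/(a²β² + a²δ² + 1)) + C(θ²/((aα+μρ)² + a²β² + a²δ² + μ²(1−ρ²) + 1)) where the real parameters α, β, γ, δ, θ, μ, ρ range over all values satisfying α² + β² + γ² + δ² ≤ P₁, θ² + μ² ≤ P₂ and ρ² ≤ 1. Then C(P₂) is the greatest element of S; that is, C(P₂) ∈ S and every element of S is at most C(P₂). -/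
/-- Section IV-D: the maximum rate for user 2 in the full-duplex Gaussian
Han-Kobayashi PDF-binning region equals the interference-free rate `C(P₂)`. -/
theorem FD_HK_PDF_binning_maxR2 (P₁ P₂ a : ℝ) (hP₁ : 0 ≤ P₁) (hP₂ : 0 ≤ P₂) :
    let C : ℝ → ℝ := fun x => (1 / 2) * Real.logb 2 (1 + x)
    let S : Set ℝ := {r | ∃ α β γ δ θ μ ρ : ℝ,
      α ^ 2 + β ^ 2 + γ ^ 2 + δ ^ 2 ≤ P₁ ∧ θ ^ 2 + μ ^ 2 ≤ P₂ ∧ ρ ^ 2 ≤ 1 ∧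
      r = C (μ ^ 2 * (1 - ρ ^ 2) / (a ^ 2 * β ^ 2 + a ^ 2 * δ ^ 2 + 1)) +
        C (θ ^ 2 / ((a * α + μ * ρ) ^ 2 + a ^ 2 * β ^ 2 + a ^ 2 * δ ^ 2 +
          μ ^ 2 * (1 - ρ ^ 2) + 1))}
    C P₂ ∈ S ∧ ∀ r ∈ S, r ≤ C P₂ := by
  intro C S
  constructor
  · refine ⟨0, 0, 0, 0, Real.sqrt P₂, 0, 0, by norm_num [hP₁], ?_, by norm_num, ?_⟩
    · simp [Real.sq_sqrt hP₂]
    · simp [C, Real.sq_sqrt hP₂]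
  · rintro r ⟨α, β, γ, δ, θ, μ, ρ, h1, h2, h3, rfl⟩
    simp only [C]
    set m : ℝ := μ ^ 2 * (1 - ρ ^ 2) with hm_def
    have hm : 0 ≤ m := mul_nonneg (sq_nonneg _) (by linarith)
    have hmμ : m ≤ μ ^ 2 := by nlinarith [sq_nonneg μ, sq_nonneg ρ]
    set D : ℝ := a ^ 2 * β ^ 2 + a ^ 2 * δ ^ 2 + 1 with hD_def
    have hD1 : 1 ≤ D := by nlinarith [mul_nonneg (sq_nonneg a) (sq_nonneg β), mul_nonneg (sq_nonneg a) (sq_nonneg δ)]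
    set E : ℝ := (a * α + μ * ρ) ^ 2 with hE_def
    have hE : 0 ≤ E := sq_nonneg _
    set x : ℝ := m / D with hx_def
    set y : ℝ := θ ^ 2 / (E + a ^ 2 * β ^ 2 + a ^ 2 * δ ^ 2 + m + 1) with hy_def
    have hx0 : 0 ≤ x := div_nonneg hm (by linarith)
    have hy0 : 0 ≤ y := div_nonneg (sq_nonneg _) (by positivity)
    have hxm : x ≤ m := div_le_self hm hD1
    have hym : y ≤ θ ^ 2 / (1 + m) := by
      apply div_le_div_of_nonneg_left (sq_nonneg _) (by linarith)
      nlinarith [sq_nonneg a, sq_nonneg β, sq_nonneg δ]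
    have key : (1 + x) * (1 + y) ≤ 1 + P₂ := by
      have h4 : (1 + x) * (1 + y) ≤ (1 + m) * (1 + θ ^ 2 / (1 + m)) := by
        apply mul_le_mul (by linarith) (by linarith) (by linarith) (by linarith)
      have h5 : (1 + m) * (1 + θ ^ 2 / (1 + m)) = 1 + m + θ ^ 2 := by
        field_simp
      nlinarith
    have hxy : (1 : ℝ) < 2 := one_lt_two
    calc (1 / 2) * Real.logb 2 (1 + x) + (1 / 2) * Real.logb 2 (1 + y)
        = (1 / 2) * Real.logb 2 ((1 + x) * (1 + y)) := by
          rw [Real.logb_mul (by linarith) (by linarith)]; ring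
      _ ≤ (1 / 2) * Real.logb 2 (1 + P₂) := by
          apply mul_le_mul_of_nonneg_left _ (by norm_num)
          exact Real.logb_le_logb_of_le (by norm_num) (by nlinarith) key
end

section
/- Let P₁ ≥ 0, P₂ ≥ 0 and a, b, c be real numbers. Then R_PDF ⊆ R_HK-PDF, where R_PDF is the set of pairs (R₁, R₂) ∈ ℝ² for which there exist reals α, β, γ, μ, ρ with α² + β² + γ² ≤ P₁, μ² ≤ P₂, ρ² ≤ 1 such that R₁ ≤ C(c²β²/(c²γ²+1)) + C(γ²/(b²μ²(1−ρ²)+1)), R₁ ≤ C(((α+bμρ)² + β² + γ²)/(b²μ²(1−ρ²)+1)), and R₂ ≤ C(μ²(1−ρ²)/(a²β² + a²γ² + 1)); and R_HK-PDF is the set of pairs (R₁, R₂) ∈ ℝ² for which there exist reals α, β, γ, δ, θ, μ, ρ with α² + β² + γ² + δ² ≤ P₁, θ² + μ² ≤ P₂, ρ² ≤ 1 such that, with the quantities I₂–I₁₀ and J₁₁–J₁₄ defined in the context, all seven inequalities hold: R₁ ≤ min(I₂+I₅, I₆); R₂ ≤ J₁₂; R₁+R₂ ≤ min(I₂+I₇,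 I₈) + J₁₃; R₁+R₂ ≤ min(I₂+I₃, I₄) + J₁₄; R₁+R₂ ≤ min(I₂+I₉, I₁₀) + J₁₁; 2R₁+R₂ ≤ min(I₂+I₃, I₄) + min(I₂+I₉, I₁₀) + J₁₃; R₁+2R₂ ≤ min(I₂+I₇, I₈) + J₁₁ + J₁₄. -/
private lemma Caux (x y D : ℝ) (hx : 0 ≤ x) (hy : 0 ≤ y) (hD : 0 < D) :
    (1 / 2) * Real.logb 2 (1 + (x + y) / D) =
    (1 / 2) * Real.logb 2 (1 + x / D) + (1 / 2) * Real.logb 2 (1 + y / (x + D)) := by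
  have hxD : 0 < x + D := by linarith
  have h : 1 + (x + y) / D = (1 + x / D) * (1 + y / (x + D)) := by
    field_simp; ring
  rw [h, Real.logb_mul (by positivity) (by positivity)]
  ring

set_option maxHeartbeats 1000000
set_option maxRecDepth 4096

set_option maxHeartbeats 4000000 in
/-- Remark 2 (Gaussian form): the full-duplex Han-Kobayashi PDF-binning rate
region (Corollary 2) contains the PDF-binning rate region (Corollary 1). -/
theorem FD_HK_PDF_contains_PDF (P₁ P₂ a b c : ℝ) (hP₁ : 0 ≤ P₁) (hP₂ : 0 ≤ P₂) :
    let C : ℝ → ℝ := fun x => (1 / 2) * Real.logb 2 (1 + x)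
    let R_PDF : Set (ℝ × ℝ) := {p | ∃ α β γ μ ρ : ℝ,
      α ^ 2 + β ^ 2 + γ ^ 2 ≤ P₁ ∧ μ ^ 2 ≤ P₂ ∧ ρ ^ 2 ≤ 1 ∧
      p.1 ≤ C (c ^ 2 * β ^ 2 / (c ^ 2 * γ ^ 2 + 1)) +
        C (γ ^ 2 / (b ^ 2 * μ ^ 2 * (1 - ρ ^ 2) + 1)) ∧
      p.1 ≤ C (((α + b * μ * ρ) ^ 2 + β ^ 2 + γ ^ 2) /
        (b ^ 2 * μ ^ 2 * (1 - ρ ^ 2) + 1)) ∧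
      p.2 ≤ C (μ ^ 2 * (1 - ρ ^ 2) / (a ^ 2 * β ^ 2 + a ^ 2 * γ ^ 2 + 1))}
    let R_HKPDF : Set (ℝ × ℝ) := {p | ∃ α β γ δ θ μ ρ : ℝ,
      α ^ 2 + β ^ 2 + γ ^ 2 + δ ^ 2 ≤ P₁ ∧ θ ^ 2 + μ ^ 2 ≤ P₂ ∧ ρ ^ 2 ≤ 1 ∧
      p.1 ≤ min (C (c ^ 2 * β ^ 2 / (c ^ 2 * γ ^ 2 + c ^ 2 * δ ^ 2 + 1)) + C ((γ ^ 2 + δ ^ 2) / (b ^ 2 * (μ ^ 2 * (1 - ρ ^ 2)) + 1))) (C ((β ^ 2 + γ ^ 2 + δ ^ 2) / (b ^ 2 * (μ ^ 2 * (1 - ρ ^ 2)) + 1)) + C ((α + b * μ * ρ) ^ 2 / (β ^ 2 + γ ^ 2 + δ ^ 2 + b ^ 2 * θ ^ 2 + b ^ 2 * (μ ^ 2 * (1 - ρ ^ 2)) + 1))) ∧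
      p.2 ≤ (C ((μ ^ 2 * (1 - ρ ^ 2)) / (a ^ 2 * β ^ 2 + a ^ 2 * δ ^ 2 + 1)) + C (θ ^ 2 / ((a * α + μ * ρ) ^ 2 + a ^ 2 * β ^ 2 + a ^ 2 * δ ^ 2 + (μ ^ 2 * (1 - ρ ^ 2)) + 1))) ∧
      p.1 + p.2 ≤ min (C (c ^ 2 * β ^ 2 / (c ^ 2 * γ ^ 2 + c ^ 2 * δ ^ 2 + 1)) + C ((δ ^ 2 + b ^ 2 * θ ^ 2) / (b ^ 2 * (μ ^ 2 * (1 - ρ ^ 2)) + 1))) (C ((β ^ 2 + δ ^ 2 + b ^ 2 * θ ^ 2) / (b ^ 2 * (μ ^ 2 * (1 - ρ ^ 2)) + 1)) + C ((α + b * μ * ρ) ^ 2 / (β ^ 2 + γ ^ 2 + δ ^ 2 + b ^ 2 * θ ^ 2 + b ^ 2 * (μ ^ 2 * (1 - ρ ^ 2)) + 1))) + (C ((μ ^ 2 * (1 - ρ ^ 2)) / (a ^ 2 * β ^ 2 + a ^ 2 * δ ^ 2 + 1)) + C (a ^ 2 * γ ^ 2 / ((a * α + μ * ρ) ^ 2 +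 a ^ 2 * β ^ 2 + a ^ 2 * δ ^ 2 + (μ ^ 2 * (1 - ρ ^ 2)) + 1))) ∧
      p.1 + p.2 ≤ min (C (c ^ 2 * β ^ 2 / (c ^ 2 * γ ^ 2 + c ^ 2 * δ ^ 2 + 1)) + C (δ ^ 2 / (b ^ 2 * (μ ^ 2 * (1 - ρ ^ 2)) + 1))) (C ((β ^ 2 + δ ^ 2) / (b ^ 2 * (μ ^ 2 * (1 - ρ ^ 2)) + 1)) + C ((α + b * μ * ρ) ^ 2 / (β ^ 2 + γ ^ 2 + δ ^ 2 + b ^ 2 * θ ^ 2 + b ^ 2 * (μ ^ 2 * (1 - ρ ^ 2)) + 1))) + (C ((μ ^ 2 * (1 - ρ ^ 2)) / (a ^ 2 * β ^ 2 + a ^ 2 * δ ^ 2 + 1)) + C ((a ^ 2 * γ ^ 2 + θ ^ 2) / ((a * α + μ * ρ) ^ 2 + a ^ 2 * β ^ 2 + a ^ 2 * δ ^ 2 + (μ ^ 2 * (1 - ρ ^ 2)) + 1))) ∧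
      p.1 + p.2 ≤ min (C (c ^ 2 * β ^ 2 / (c ^ 2 * γ ^ 2 + c ^ 2 * δ ^ 2 + 1)) + C ((γ ^ 2 + δ ^ 2 + b ^ 2 * θ ^ 2) / (b ^ 2 * (μ ^ 2 * (1 - ρ ^ 2)) + 1))) (C (((α + b * μ * ρ) ^ 2 + β ^ 2 + γ ^ 2 + δ ^ 2 + b ^ 2 * θ ^ 2) / (b ^ 2 * (μ ^ 2 * (1 - ρ ^ 2)) + 1))) + C ((μ ^ 2 * (1 - ρ ^ 2)) / (a ^ 2 * β ^ 2 + a ^ 2 * δ ^ 2 + 1)) ∧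
      2 * p.1 + p.2 ≤ min (C (c ^ 2 * β ^ 2 / (c ^ 2 * γ ^ 2 + c ^ 2 * δ ^ 2 + 1)) + C (δ ^ 2 / (b ^ 2 * (μ ^ 2 * (1 - ρ ^ 2)) + 1))) (C ((β ^ 2 + δ ^ 2) / (b ^ 2 * (μ ^ 2 * (1 - ρ ^ 2)) + 1)) + C ((α + b * μ * ρ) ^ 2 / (β ^ 2 + γ ^ 2 + δ ^ 2 + b ^ 2 * θ ^ 2 + b ^ 2 * (μ ^ 2 * (1 - ρ ^ 2)) + 1))) + min (C (c ^ 2 * β ^ 2 / (c ^ 2 * γ ^ 2 + c ^ 2 * δ ^ 2 + 1)) + C ((γ ^ 2 + δ ^ 2 + b ^ 2 * θ ^ 2) / (b ^ 2 * (μ ^ 2 * (1 - ρ ^ 2)) + 1))) (C (((α + b * μ * ρ) ^ 2 + β ^ 2 + γ ^ 2 + δ ^ 2 + b ^ 2 * θ ^ 2) / (b ^ 2 * (μ ^ 2 * (1 - ρ ^ 2)) + 1))) + (C ((μ ^ 2 * (1 - ρ ^ 2)) / (a ^ 2 * β ^ 2 + a ^ 2 * δ ^ 2 + 1)) + C (a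 ^ 2 * γ ^ 2 / ((a * α + μ * ρ) ^ 2 + a ^ 2 * β ^ 2 + a ^ 2 * δ ^ 2 + (μ ^ 2 * (1 - ρ ^ 2)) + 1))) ∧
      p.1 + 2 * p.2 ≤ min (C (c ^ 2 * β ^ 2 / (c ^ 2 * γ ^ 2 + c ^ 2 * δ ^ 2 + 1)) + C ((δ ^ 2 + b ^ 2 * θ ^ 2) / (b ^ 2 * (μ ^ 2 * (1 - ρ ^ 2)) + 1))) (C ((β ^ 2 + δ ^ 2 + b ^ 2 * θ ^ 2) / (b ^ 2 * (μ ^ 2 * (1 - ρ ^ 2)) + 1)) + C ((α + b * μ * ρ) ^ 2 / (β ^ 2 + γ ^ 2 + δ ^ 2 + b ^ 2 * θ ^ 2 + b ^ 2 * (μ ^ 2 * (1 - ρ ^ 2)) + 1))) + C ((μ ^ 2 * (1 - ρ ^ 2)) / (a ^ 2 * β ^ 2 + a ^ 2 * δ ^ 2 + 1)) + (C ((μ ^ 2 * (1 - ρ ^ 2)) / (a ^ 2 * β ^ 2 + a ^ 2 * δ ^ 2 + 1)) + C ((a ^ 2 * γ ^ 2 + θ ^ 2) / ((a * α + μ * ρ)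 ^ 2 + a ^ 2 * β ^ 2 + a ^ 2 * δ ^ 2 + (μ ^ 2 * (1 - ρ ^ 2)) + 1)))}
    R_PDF ⊆ R_HKPDF := by
  intro C R_PDF R_HKPDF p hp
  simp only [R_PDF, Set.mem_setOf_eq] at hp
  simp only [R_HKPDF, Set.mem_setOf_eq]
  obtain ⟨α, β, γ, μ, ρ, hP1, hP2, hρ, h1, h2, h3⟩ := hp
  have hC : ∀ x, C x = 1 / 2 * Real.logb 2 (1 + x) := fun _ => rfl
  have hC0 : C 0 = 0 := by rw [hC]; norm_num
  have h1ρ : 0 ≤ 1 - ρ ^ 2 := by linarith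
  have hM : 0 ≤ μ ^ 2 * (1 - ρ ^ 2) := by positivity
  have hD : 0 < b ^ 2 * (μ ^ 2 * (1 - ρ ^ 2)) + 1 := by
    have := mul_nonneg (sq_nonneg b) hM; linarith
  have g1 : p.1 ≤ C (c ^ 2 * β ^ 2 / (c ^ 2 * γ ^ 2 + 1)) +
      C (γ ^ 2 / (b ^ 2 * (μ ^ 2 * (1 - ρ ^ 2)) + 1)) := by
    have e : γ ^ 2 / (b ^ 2 * (μ ^ 2 * (1 - ρ ^ 2)) + 1)
        = γ ^ 2 / (b ^ 2 * μ ^ 2 * (1 - ρ ^ 2) + 1) := by ring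
    rw [e]; exact h1
  have g2 : p.1 ≤ C (((α + b * μ * ρ) ^ 2 + β ^ 2 + γ ^ 2) /
      (b ^ 2 * (μ ^ 2 * (1 - ρ ^ 2)) + 1)) := by
    have e : ((α + b * μ * ρ) ^ 2 + β ^ 2 + γ ^ 2) / (b ^ 2 * (μ ^ 2 * (1 - ρ ^ 2)) + 1)
        = ((α + b * μ * ρ) ^ 2 + β ^ 2 + γ ^ 2) / (b ^ 2 * μ ^ 2 * (1 - ρ ^ 2) + 1) := by ring
    rw [e]; exact h2
  have gB : p.1 ≤ C ((β ^ 2 + γ ^ 2) / (b ^ 2 * (μ ^ 2 * (1 - ρ ^ 2)) + 1)) +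
      C ((α + b * μ * ρ) ^ 2 / (β ^ 2 + γ ^ 2 + b ^ 2 * (μ ^ 2 * (1 - ρ ^ 2)) + 1)) := by
    have key := Caux (β ^ 2 + γ ^ 2) ((α + b * μ * ρ) ^ 2)
      (b ^ 2 * (μ ^ 2 * (1 - ρ ^ 2)) + 1) (by positivity) (sq_nonneg _) hD
    have e1 : (α + b * μ * ρ) ^ 2 / (β ^ 2 + γ ^ 2 + b ^ 2 * (μ ^ 2 * (1 - ρ ^ 2)) + 1)
        = (α + b * μ * ρ) ^ 2 / (β ^ 2 + γ ^ 2 + (b ^ 2 * (μ ^ 2 * (1 - ρ ^ 2)) + 1)) := by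
      ring
    have e2 : (β ^ 2 + γ ^ 2 + (α + b * μ * ρ) ^ 2) / (b ^ 2 * (μ ^ 2 * (1 - ρ ^ 2)) + 1)
        = ((α + b * μ * ρ) ^ 2 + β ^ 2 + γ ^ 2) / (b ^ 2 * (μ ^ 2 * (1 - ρ ^ 2)) + 1) := by
      ring
    rw [e1]
    calc p.1 ≤ C (((α + b * μ * ρ) ^ 2 + β ^ 2 + γ ^ 2) /
          (b ^ 2 * (μ ^ 2 * (1 - ρ ^ 2)) + 1)) := g2
      _ = C ((β ^ 2 + γ ^ 2 + (α + b * μ * ρ) ^ 2) /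
          (b ^ 2 * (μ ^ 2 * (1 - ρ ^ 2)) + 1)) := by rw [e2]
      _ = _ := by simp only [hC]; exact key
  have g3' : p.2 ≤ C (μ ^ 2 * (1 - ρ ^ 2) / (a ^ 2 * β ^ 2 + a ^ 2 * γ ^ 2 + 1)) + C 0 := by
    rw [hC0, add_zero]; exact h3
  have m := le_min g1 gB
  have m5 := le_min g1 g2
  refine ⟨α, β, 0, γ, 0, μ, ρ, by linarith, by linarith, hρ, ?_, ?_, ?_, ?_, ?_, ?_, ?_⟩ <;>
    norm_num
  · exact ⟨g1, gB⟩
  · exact g3'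
  · exact add_le_add m g3'
  · exact add_le_add m g3'
  · exact add_le_add m5 h3
  · calc 2 * p.1 + p.2 = p.1 + p.1 + p.2 := by ring
      _ ≤ _ := add_le_add (add_le_add m m5) g3'
  · calc p.1 + 2 * p.2 = p.1 + p.2 + p.2 := by ring
      _ ≤ _ := add_le_add (add_le_add m h3) g3'
end

section
/- Let P₁ ≥ 0, P₂ ≥ 0 and a be real numbers, and let C(x) = (1/2)·log₂(1 + x). Consider the set S of real numbers of the form (1−τ)·[ C(μ²(1−ρ²)/(a²γ₂² + 1)) + C(θ²/((aα₂+μρ)² + a²γ₂² + μ²(1−ρ²) + 1)) ] where the real parameters τ, α₁, α₂, β₂, γ₂, θ, μ, ρ range over all values satisfying 0 ≤ τ ≤ 1, τ·α₁² + (1−τ)·(α₂² + β₂² + γ₂²) ≤ P₁, (1−τ)·(μ² + θ²) ≤ P₂ and ρ² ≤ 1. Then C(P₂) is the greatest element of S; that is, C(P₂) ∈ S and every element of S is at most C(P₂). -/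
/-- Bernoulli-type bound: `λ·log(1+s) ≤ log(1+λ·s)` for `0 ≤ λ ≤ 1`, `0 ≤ s`. -/
lemma aux_log_bound {l s : ℝ} (hl0 : 0 ≤ l) (hl1 : l ≤ 1) (hs : 0 ≤ s) :
    l * Real.log (1 + s) ≤ Real.log (1 + l * s) := by
  have h1 : (0:ℝ) < 1 + s := by linarith
  have h2 : (1 + s) ^ l ≤ 1 + l * s :=
    rpow_one_add_le_one_add_mul_self (by linarith) hl0 hl1
  have h3 : Real.log ((1 + s) ^ l) ≤ Real.log (1 + l * s) :=
    Real.log_le_log (by positivity) h2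
  rwa [Real.log_rpow h1] at h3

set_option maxHeartbeats 1600000 in
/-- Equation (36): in the half-duplex Gaussian Han-Kobayashi PDF-binning
region, the maximum rate for the second user is the interference-free rate
`C(P₂)`. -/
theorem HD_HK_PDF_binning_maxR2 (P₁ P₂ a : ℝ) (hP₁ : 0 ≤ P₁) (hP₂ : 0 ≤ P₂) :
    let C : ℝ → ℝ := fun x => (1 / 2) * Real.logb 2 (1 + x)
    let S : Set ℝ := {r | ∃ τ α₁ α₂ β₂ γ₂ θ μ ρ : ℝ,
      0 ≤ τ ∧ τ ≤ 1 ∧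
      τ * α₁ ^ 2 + (1 - τ) * (α₂ ^ 2 + β₂ ^ 2 + γ₂ ^ 2) ≤ P₁ ∧
      (1 - τ) * (μ ^ 2 + θ ^ 2) ≤ P₂ ∧ ρ ^ 2 ≤ 1 ∧
      r = (1 - τ) *
        (C (μ ^ 2 * (1 - ρ ^ 2) / (a ^ 2 * γ₂ ^ 2 + 1)) +
          C (θ ^ 2 / ((a * α₂ + μ * ρ) ^ 2 + a ^ 2 * γ₂ ^ 2 +
            μ ^ 2 * (1 - ρ ^ 2) + 1)))}
    C P₂ ∈ S ∧ ∀ r ∈ S, r ≤ C P₂ := by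
  intro C S
  constructor
  · refine ⟨0, 0, 0, 0, 0, 0, Real.sqrt P₂, 0, le_refl 0, zero_le_one, by simpa using hP₁,
      by simpa [Real.sq_sqrt hP₂], by norm_num, ?_⟩
    simp [C, Real.sq_sqrt hP₂]
  · rintro r ⟨τ, α₁, α₂, β₂, γ₂, θ, μ, ρ, hτ0, hτ1, _, hpow, hρ, rfl⟩
    set l : ℝ := 1 - τ with hl
    have hl0 : 0 ≤ l := by linarith
    have hl1 : l ≤ 1 := by linarith
    set m : ℝ := μ ^ 2 * (1 - ρ ^ 2) with hm
    set t : ℝ := θ ^ 2 with ht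
    have hm0 : 0 ≤ m := by
      apply mul_nonneg (sq_nonneg _); linarith
    have ht0 : 0 ≤ t := sq_nonneg _
    set A : ℝ := a ^ 2 * γ₂ ^ 2 + 1 with hA
    set B : ℝ := (a * α₂ + μ * ρ) ^ 2 + a ^ 2 * γ₂ ^ 2 + μ ^ 2 * (1 - ρ ^ 2) + 1 with hB
    have hA1 : 1 ≤ A := by nlinarith [sq_nonneg (a * γ₂)]
    have hB1 : 1 + m ≤ B := by nlinarith [sq_nonneg (a * α₂ + μ * ρ), sq_nonneg (a * γ₂)]
    have hA0 : 0 < A := by linarith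
    have hB0 : 0 < B := by linarith
    set x : ℝ := m / A with hx
    set y : ℝ := t / B with hy
    have hx0 : 0 ≤ x := div_nonneg hm0 hA0.le
    have hy0 : 0 ≤ y := div_nonneg ht0 hB0.le
    -- key product bound
    have hprod : (1 + x) * (1 + y) ≤ 1 + (m + t) := by
      have h1 : 1 + x ≤ 1 + m := by
        have : x ≤ m := by
          rw [hx, div_le_iff₀ hA0]; nlinarith
        linarith
      have h2 : y ≤ t / (1 + m) := by
        apply div_le_div_of_nonneg_left ht0 (by linarith) hB1
      have h3 : (1 + x) * (1 + y) ≤ (1 + m) * (1 + t / (1 + m)) := by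
        apply mul_le_mul h1 (by linarith) (by linarith) (by linarith)
      have h4 : (1 + m) * (1 + t / (1 + m)) = 1 + (m + t) := by
        field_simp; ring
      linarith [h3, h4.le]
    -- sum of C's as a single logb
    have hsum : C x + C y = (1 / 2) * Real.logb 2 ((1 + x) * (1 + y)) := by
      simp only [C]
      rw [Real.logb, Real.logb, Real.logb, Real.log_mul (by positivity) (by positivity)]
      ring
    have hlog2 : (0:ℝ) < Real.log 2 := Real.log_pos (by norm_num)
    set s : ℝ := (1 + x) * (1 + y) - 1 with hs
    have hs0 : 0 ≤ s := by
      have h : (1 + x) * (1 + y) - 1 = x + y + x * y := by ring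
      rw [hs, h]; positivity
    have hstep : l * Real.log (1 + s) ≤ Real.log (1 + l * s) := aux_log_bound hl0 hl1 hs0
    have hls : l * s ≤ P₂ := by
      have hmt : s ≤ m + t := by simp only [hs]; linarith
      have h1 : l * s ≤ l * (m + t) := mul_le_mul_of_nonneg_left hmt hl0
      have h2 : l * (m + t) ≤ l * (μ ^ 2 + t) := by
        apply mul_le_mul_of_nonneg_left _ hl0
        have hmle : m ≤ μ ^ 2 := by
          rw [hm]
          calc μ ^ 2 * (1 - ρ ^ 2) ≤ μ ^ 2 * 1 :=
                mul_le_mul_of_nonneg_left (by nlinarith [sq_nonneg ρ]) (sq_nonneg μ)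
            _ = μ ^ 2 := mul_one _
        linarith
      linarith [hpow]
    have hfinal : Real.log (1 + l * s) ≤ Real.log (1 + P₂) := by
      apply Real.log_le_log (by positivity) (by linarith)
    have : l * (C x + C y) ≤ C P₂ := by
      rw [hsum]
      simp only [C, Real.logb]
      have h1s : (1 + x) * (1 + y) = 1 + s := by simp [hs]
      rw [h1s]
      calc l * (1 / 2 * (Real.log (1 + s) / Real.log 2))
          = (1 / 2) * ((l * Real.log (1 + s)) / Real.log 2) := by ring
        _ ≤ (1 / 2) * (Real.log (1 + l * s) / Real.log 2) := by
            apply mul_le_mul_of_nonneg_left _ (by norm_num)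
            exact div_le_div_of_nonneg_right hstep hlog2.le
        _ ≤ (1 / 2) * (Real.log (1 + P₂) / Real.log 2) := by
            apply mul_le_mul_of_nonneg_left _ (by norm_num)
            exact div_le_div_of_nonneg_right hfinal hlog2.le
    exact this
end
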